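/- For every Schwartz function Ψ ∈ S(ℝ^d), every j ∈ {1,…,d} and all k, y ∈ ℝ^d, the Bloch–Floquet–Zak transform intertwines momentum as follows: (Z(−i ∂_{x_j} Ψ))(k,y) = −i ∂_{y_j} (ZΨ)(k,y) + k_j (ZΨ)(k,y). -/

import Mathlib

open scoped BigOperators RealInnerProductSpace

noncomputable section

abbrev Ed (d : ℕ) := EuclideanSpace ℝ (Fin d)

/-- The lattice vector with integer coefficients `m` with respect to the basis `e`. -/
noncomputable def latVec {d : ℕ} (e : Fin d → Ed d) (m : Fin d → ℤ) : Ed d :=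
  ∑ j, (m j : ℝ) • e j

/-- The Bloch–Floquet–Zak transform `(ZΨ)(k,y) = ∑_{γ ∈ Γ} e^{-ik·(y+γ)} Ψ(y+γ)`. -/
noncomputable def zak {d : ℕ} (e : Fin d → Ed d) (Ψ : SchwartzMap (Ed d) ℂ)
    (k y : Ed d) : ℂ :=
  ∑' m : Fin d → ℤ,
    Complex.exp (-Complex.I * ((⟪k, y + latVec e m⟫ : ℝ) : ℂ)) * Ψ (y + latVec e m)

set_option maxHeartbeats 1000000

lemma base_sum : Summable (fun n : ℤ => ((1 + |(n : ℝ)|) ^ 2)⁻¹) := by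
  have hn : Summable (fun n : ℕ => ((1 + |((n : ℤ) : ℝ)|) ^ 2)⁻¹) := by
    have : Summable (fun n : ℕ => ((n + 1 : ℝ) ^ 2)⁻¹) := by
      have := (summable_nat_add_iff (f := fun n : ℕ => ((n : ℝ) ^ 2)⁻¹) 1).2
        (Real.summable_one_div_nat_pow.2 one_lt_two |>.congr (by intro n; simp [one_div]))
      exact this.congr (by intro n; push_cast; ring_nf)
    exact this.congr (by intro n; push_cast [abs_of_nonneg (by positivity : (0:ℝ) ≤ (n:ℝ))]; ring_nf)
  refine Summable.of_nat_of_neg hn (hn.congr ?_)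
  intro n; simp

lemma summable_pi_int (d : ℕ) : Summable (fun m : Fin d → ℤ => ∏ j, ((1 + |(m j : ℝ)|) ^ 2)⁻¹) := by
  induction d with
  | zero => exact .of_finite
  | succ n ih =>
      have h := (base_sum.mul_of_nonneg ih (fun _ => by positivity) (fun _ => by positivity))
      refine ((Fin.consEquiv (fun _ : Fin (n+1) => ℤ)).summable_iff).1 ?_
      refine h.congr ?_
      rintro ⟨a, m⟩
      simp [Fin.consEquiv, Fin.prod_univ_succ, mul_comm]


lemma schwartz_decay_bound' {d : ℕ} (Ψ : SchwartzMap (Ed d) ℂ) (N : ℕ) :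
    ∃ C, 0 ≤ C ∧ ∀ z, (‖Ψ z‖ + ‖fderiv ℝ (⇑Ψ) z‖) * (1 + ‖z‖) ^ N ≤ C := by
  set S := 2 ^ N * (Finset.Iic (N, 1)).sup (fun m => SchwartzMap.seminorm ℝ m.1 m.2) Ψ with hS
  have hS0 : 0 ≤ S := mul_nonneg (by positivity) (apply_nonneg _ _)
  refine ⟨2 * S, by positivity, fun z => ?_⟩
  have h0 := SchwartzMap.one_add_le_sup_seminorm_apply (𝕜 := ℝ) (m := (N, 1)) (k := N) (n := 0)
    le_rfl (by norm_num) Ψ z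
  have h1 := SchwartzMap.one_add_le_sup_seminorm_apply (𝕜 := ℝ) (m := (N, 1)) (k := N) (n := 1)
    le_rfl le_rfl Ψ z
  rw [norm_iteratedFDeriv_zero] at h0
  have e1 : ‖fderiv ℝ (⇑Ψ) z‖ ≤ ‖iteratedFDeriv ℝ 1 (⇑Ψ) z‖ := by
    refine ContinuousLinearMap.opNorm_le_bound _ (norm_nonneg _) fun v => ?_
    have := (iteratedFDeriv ℝ 1 (⇑Ψ) z).le_opNorm (fun _ => v)
    simpa [iteratedFDeriv_one_apply] using this
  have hzn : (0:ℝ) ≤ (1 + ‖z‖) ^ N := by positivity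
  nlinarith [mul_le_mul_of_nonneg_left e1 hzn]

lemma schwartz_decay_bound {d : ℕ} (Ψ : SchwartzMap (Ed d) ℂ) (N : ℕ) :
    ∃ C, 0 ≤ C ∧ ∀ z, ‖Ψ z‖ + ‖fderiv ℝ (⇑Ψ) z‖ ≤ C * ((1 + ‖z‖) ^ N)⁻¹ := by
  obtain ⟨C, hC0, hC⟩ := schwartz_decay_bound' Ψ N
  refine ⟨C, hC0, fun z => ?_⟩
  rw [← div_eq_mul_inv, le_div_iff₀ (by positivity)]
  exact hC z

lemma lat_bound {d : ℕ} (b : Module.Basis (Fin d) ℝ (Ed d)) :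
    ∃ c, 0 ≤ c ∧ ∀ (m : Fin d → ℤ) (j : Fin d), |(m j : ℝ)| ≤ c * ‖latVec ⇑b m‖ := by
  refine ⟨‖(b.equivFunL.toContinuousLinearMap : Ed d →L[ℝ] (Fin d → ℝ))‖, norm_nonneg _,
    fun m j => ?_⟩
  have h1 : b.equivFun (latVec ⇑b m) = fun j => (m j : ℝ) := by
    have : latVec ⇑b m = b.equivFun.symm (fun j => (m j : ℝ)) := by
      rw [Module.Basis.equivFun_symm_apply]; rfl
    rw [this, LinearEquiv.apply_symm_apply]
  calc |(m j : ℝ)| = ‖(fun i => (m i : ℝ) : Fin d → ℝ) j‖ := by simp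
    _ ≤ ‖(fun i => (m i : ℝ) : Fin d → ℝ)‖ :=
        norm_le_pi_norm (fun i => (m i : ℝ) : Fin d → ℝ) j
    _ = ‖b.equivFunL.toContinuousLinearMap (latVec ⇑b m)‖ := by
        congr 1
        simp only [ContinuousLinearEquiv.coe_coe]
        rw [← h1]
        rfl
    _ ≤ _ := ContinuousLinearMap.le_opNorm _ _


/-- The Bloch–Floquet–Zak transform intertwines momentum:
if `Φ = −i ∂_{x_j} Ψ` then `(ZΦ)(k,y) = −i ∂_{y_j}(ZΨ)(k,y) + k_j (ZΨ)(k,y)`. -/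
theorem zak_momentum {d : ℕ} (b : Module.Basis (Fin d) ℝ (Ed d))
    (Ψ Φ : SchwartzMap (Ed d) ℂ) (j : Fin d)
    (hΦ : ∀ x, Φ x = -Complex.I * fderiv ℝ (⇑Ψ) x (EuclideanSpace.single j 1))
    (k y : Ed d) :
    zak (⇑b) Φ k y
      = -Complex.I * fderiv ℝ (fun y' => zak (⇑b) Ψ k y') y (EuclideanSpace.single j 1)
        + ((k j : ℝ) : ℂ) * zak (⇑b) Ψ k y := by
  classical
  set L : (Fin d → ℤ) → Ed d := latVec ⇑b with hLdef
  set A : Ed d →L[ℝ] ℂ := -Complex.I • (Complex.ofRealCLM.comp (innerSL ℝ k)) with hAdef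
  set g : (Fin d → ℤ) → Ed d → ℂ :=
    fun m x => Complex.exp (-Complex.I * ((⟪k, x + L m⟫ : ℝ) : ℂ)) * Ψ (x + L m) with hgdef
  set f' : (Fin d → ℤ) → Ed d → (Ed d →L[ℝ] ℂ) :=
    fun m x => Complex.exp (-Complex.I * ((⟪k, x + L m⟫ : ℝ) : ℂ)) • fderiv ℝ (⇑Ψ) (x + L m)
      + Ψ (x + L m) • (Complex.exp (-Complex.I * ((⟪k, x + L m⟫ : ℝ) : ℂ)) • A) with hf'def
  -- each term is differentiable
  have hasF : ∀ m x, HasFDerivAt (g m) (f' m x) x := by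
    intro m x
    have htr : HasFDerivAt (fun x : Ed d => x + L m) (ContinuousLinearMap.id ℝ (Ed d)) x :=
      (hasFDerivAt_id x).add_const (L m)
    have hinner : HasFDerivAt (fun x : Ed d => (⟪k, x + L m⟫ : ℝ)) (innerSL ℝ k) x := by
      have h := ((innerSL ℝ k).hasFDerivAt (x := x + L m)).comp x htr
      exact h
    have hh : HasFDerivAt (fun x : Ed d => -Complex.I * ((⟪k, x + L m⟫ : ℝ) : ℂ))
        ((-Complex.I) • (Complex.ofRealCLM.comp (innerSL ℝ k))) x := by
      have h2 : HasFDerivAt (fun x : Ed d => ((⟪k, x + L m⟫ : ℝ) : ℂ))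
          (Complex.ofRealCLM.comp (innerSL ℝ k)) x := (Complex.ofRealCLM.hasFDerivAt).comp x hinner
      have := h2.const_smul (-Complex.I)
      simp only [Pi.smul_def, smul_eq_mul] at this
      convert this using 1
    have hexp : HasFDerivAt (fun x : Ed d => Complex.exp (-Complex.I * ((⟪k, x + L m⟫ : ℝ) : ℂ)))
        (Complex.exp (-Complex.I * ((⟪k, x + L m⟫ : ℝ) : ℂ)) •
          ((-Complex.I) • (Complex.ofRealCLM.comp (innerSL ℝ k)))) x := hh.cexp
    have hΨ : HasFDerivAt (fun x : Ed d => Ψ (x + L m)) (fderiv ℝ (⇑Ψ) (x + L m)) x := by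
      have h := ((Ψ.differentiable).differentiableAt.hasFDerivAt (x := x + L m)).comp x htr
      exact h
    exact hexp.mul hΨ
  -- norm facts
  have hexp1 : ∀ r : ℝ, ‖Complex.exp (-Complex.I * (r : ℂ))‖ = 1 := by
    intro r
    rw [Complex.norm_exp]
    simp
  have hA_norm : ‖A‖ ≤ ‖k‖ := by
    refine ContinuousLinearMap.opNorm_le_bound _ (norm_nonneg k) fun v => ?_
    have hv : A v = -Complex.I * ((⟪k, v⟫ : ℝ) : ℂ) := by
      simp [hAdef, smul_eq_mul]
    rw [hv, norm_mul]
    have h1 : ‖-Complex.I‖ = 1 := by simp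
    have h2 : ‖((⟪k, v⟫ : ℝ) : ℂ)‖ = |(⟪k, v⟫ : ℝ)| := by
      rw [Complex.norm_real, Real.norm_eq_abs]
    rw [h1, h2, one_mul]
    exact abs_real_inner_le_norm k v
  -- decay bounds
  obtain ⟨C, hC0, hC⟩ := schwartz_decay_bound Ψ (2 * d)
  obtain ⟨CΦ, hCΦ0, hCΦ⟩ := schwartz_decay_bound Φ (2 * d)
  obtain ⟨c, hc0, hc⟩ := lat_bound b
  set K : ℝ := 1 + c * (1 + ‖y‖) + c with hKdef
  have hK1 : (1 : ℝ) ≤ K := by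
    have : 0 ≤ c * (1 + ‖y‖) := by positivity
    simp only [hKdef]; linarith
  have hK0 : (0 : ℝ) < K := lt_of_lt_of_le one_pos hK1
  -- key pointwise bound on the ball
  have hball : ∀ (m : Fin d → ℤ) (x : Ed d), x ∈ Metric.ball y 1 →
      ((1 + ‖x + L m‖) ^ (2 * d))⁻¹ ≤ K ^ (2 * d) * (∏ i, (1 + |(m i : ℝ)|) ^ 2)⁻¹ := by
    intro m x hx
    have hxy : ‖x‖ ≤ ‖y‖ + 1 := by
      have := mem_ball_iff_norm.1 hx
      have h2 := norm_sub_norm_le x y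
      linarith
    have hstep : ∀ i, 1 + |(m i : ℝ)| ≤ K * (1 + ‖x + L m‖) := by
      intro i
      have h1 : |(m i : ℝ)| ≤ c * ‖L m‖ := hc m i
      have h2 : ‖L m‖ ≤ ‖x + L m‖ + ‖x‖ := by
        have := norm_sub_le (x + L m) x
        simpa using this
      have hKe : K * (1 + ‖x + L m‖) = K + K * ‖x + L m‖ := by ring
      have hcK : c ≤ K := by
        have : 0 ≤ c * (1 + ‖y‖) := by positivity
        simp only [hKdef]; linarith
      have h3 : c * ‖L m‖ ≤ c * ‖x + L m‖ + c * ‖x‖ := by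
        have h := mul_le_mul_of_nonneg_left h2 hc0
        rw [mul_add] at h; exact h
      have h4 : c * ‖x + L m‖ ≤ K * ‖x + L m‖ :=
        mul_le_mul_of_nonneg_right hcK (norm_nonneg _)
      have h5 : c * ‖x‖ ≤ c * (1 + ‖y‖) := by
        have hx1 : ‖x‖ ≤ 1 + ‖y‖ := by linarith
        exact mul_le_mul_of_nonneg_left hx1 hc0
      have h6 : 1 + c * (1 + ‖y‖) ≤ K := by
        simp only [hKdef]; linarith
      rw [hKe]
      linarith
    have hP : (0:ℝ) < ∏ i, (1 + |(m i : ℝ)|) ^ 2 := by positivity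
    have hQ : (0:ℝ) < (1 + ‖x + L m‖) ^ (2 * d) := by positivity
    have hprod : ∏ i, (1 + |(m i : ℝ)|) ^ 2 ≤ K ^ (2 * d) * (1 + ‖x + L m‖) ^ (2 * d) := by
      calc ∏ i, (1 + |(m i : ℝ)|) ^ 2 ≤ ∏ _i : Fin d, (K * (1 + ‖x + L m‖)) ^ 2 := by
            apply Finset.prod_le_prod
            · intro i _; positivity
            · intro i _
              have h1 := hstep i
              have h0 : (0:ℝ) ≤ 1 + |(m i : ℝ)| := by positivity
              exact pow_le_pow_left₀ h0 h1 2
        _ = K ^ (2 * d) * (1 + ‖x + L m‖) ^ (2 * d) := by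
            rw [Finset.prod_const, Finset.card_univ, Fintype.card_fin,
              ← pow_mul, mul_pow]
    rw [← div_eq_mul_inv, le_div_iff₀ hP, inv_mul_eq_div, div_le_iff₀ hQ]
    linarith
  set u : (Fin d → ℤ) → ℝ :=
    fun m => (1 + ‖k‖) * (C * (K ^ (2 * d) * (∏ i, (1 + |(m i : ℝ)|) ^ 2)⁻¹)) with hudef
  have h2sum : Summable (fun m : Fin d → ℤ => (∏ i, (1 + |(m i : ℝ)|) ^ 2)⁻¹) := by
    refine (summable_pi_int d).congr fun m => ?_
    rw [← Finset.prod_inv_distrib]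
  have hu : Summable u := ((h2sum.mul_left _).mul_left _).mul_left _
  have hbound : ∀ (m : Fin d → ℤ) (x : Ed d), x ∈ Metric.ball y 1 →
      ‖Ψ (x + L m)‖ + ‖fderiv ℝ (⇑Ψ) (x + L m)‖
        ≤ C * (K ^ (2 * d) * (∏ i, (1 + |(m i : ℝ)|) ^ 2)⁻¹) := by
    intro m x hx
    refine (hC _).trans ?_
    exact mul_le_mul_of_nonneg_left (hball m x hx) hC0
  have hf'le : ∀ (m : Fin d → ℤ) (x : Ed d), x ∈ Metric.ball y 1 → ‖f' m x‖ ≤ u m := by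
    intro m x hx
    have e1 : ‖Complex.exp (-Complex.I * ((⟪k, x + L m⟫ : ℝ) : ℂ)) •
        fderiv ℝ (⇑Ψ) (x + L m)‖ ≤ ‖fderiv ℝ (⇑Ψ) (x + L m)‖ := by
      refine (norm_smul_le (Complex.exp (-Complex.I * ((⟪k, x + L m⟫ : ℝ) : ℂ)))
        (fderiv ℝ (⇑Ψ) (x + L m))).trans ?_
      rw [hexp1, one_mul]
    have e2 : ‖Ψ (x + L m) • (Complex.exp (-Complex.I * ((⟪k, x + L m⟫ : ℝ) : ℂ)) • A)‖
        ≤ ‖Ψ (x + L m)‖ * ‖k‖ := by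
      refine (norm_smul_le (Ψ (x + L m))
        (Complex.exp (-Complex.I * ((⟪k, x + L m⟫ : ℝ) : ℂ)) • A)).trans ?_
      have h6 : ‖Complex.exp (-Complex.I * ((⟪k, x + L m⟫ : ℝ) : ℂ)) • A‖ ≤ ‖k‖ := by
        refine (norm_smul_le (Complex.exp (-Complex.I * ((⟪k, x + L m⟫ : ℝ) : ℂ))) A).trans ?_
        rw [hexp1, one_mul]
        exact hA_norm
      exact mul_le_mul_of_nonneg_left h6 (norm_nonneg _)
    have h1 : ‖f' m x‖ ≤ ‖fderiv ℝ (⇑Ψ) (x + L m)‖ + ‖Ψ (x + L m)‖ * ‖k‖ := by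
      simp only [hf'def]
      exact (norm_add_le _ _).trans (add_le_add e1 e2)
    have h2 : ‖fderiv ℝ (⇑Ψ) (x + L m)‖ + ‖Ψ (x + L m)‖ * ‖k‖
        ≤ (1 + ‖k‖) * (‖Ψ (x + L m)‖ + ‖fderiv ℝ (⇑Ψ) (x + L m)‖) := by
      have h3 := norm_nonneg (Ψ (x + L m))
      have h4 := norm_nonneg (fderiv ℝ (⇑Ψ) (x + L m))
      have h5 := norm_nonneg k
      nlinarith
    refine h1.trans (h2.trans ?_)
    exact mul_le_mul_of_nonneg_left (hbound m x hx) (by positivity)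
  have hg0 : Summable (fun m => g m y) := by
    apply Summable.of_norm
    refine Summable.of_nonneg_of_le (fun _ => norm_nonneg _) (fun m => ?_)
      ((h2sum.mul_left (K ^ (2 * d))).mul_left C)
    have : ‖g m y‖ = ‖Ψ (y + L m)‖ := by
      simp only [hgdef, norm_mul, hexp1, one_mul]
    rw [this]
    refine le_trans ?_ (hbound m y (Metric.mem_ball_self one_pos))
    have := norm_nonneg (fderiv ℝ (⇑Ψ) (y + L m))
    linarith
  have Hder : HasFDerivAt (fun x => ∑' m, g m x) (∑' m, f' m y) y :=
    hasFDerivAt_tsum_of_isPreconnected hu Metric.isOpen_ball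
      (convex_ball y 1).isPreconnected (fun m x _ => hasF m x) hf'le
      (Metric.mem_ball_self one_pos) hg0 (Metric.mem_ball_self one_pos)
  have hzak_eq : (fun y' => zak (⇑b) Ψ k y') = fun x => ∑' m, g m x := rfl
  have hfd : fderiv ℝ (fun y' => zak (⇑b) Ψ k y') y = ∑' m, f' m y := by
    rw [hzak_eq]
    exact Hder.fderiv
  have Sf' : Summable (fun m => f' m y) := by
    apply Summable.of_norm
    exact Summable.of_nonneg_of_le (fun _ => norm_nonneg _)
      (fun m => hf'le m y (Metric.mem_ball_self one_pos)) hu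
  have hzakPhi : zak (⇑b) Φ k y
      = ∑' m, Complex.exp (-Complex.I * ((⟪k, y + L m⟫ : ℝ) : ℂ)) * Φ (y + L m) := rfl
  have hzakPsiy : zak (⇑b) Ψ k y = ∑' m, g m y := rfl
  clear_value L A g f'
  have hinnerj : (⟪k, EuclideanSpace.single j (1:ℝ)⟫ : ℝ) = k j := by
    rw [EuclideanSpace.inner_single_right]
    simp
  have happly : (∑' m, f' m y) (EuclideanSpace.single j 1)
      = ∑' m, f' m y (EuclideanSpace.single j 1) :=
    (ContinuousLinearMap.apply ℝ ℂ (EuclideanSpace.single j 1)).map_tsum Sf'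
  have Sf'a : Summable (fun m => f' m y (EuclideanSpace.single j 1)) :=
    (ContinuousLinearMap.apply ℝ ℂ (EuclideanSpace.single j 1)).summable Sf'
  have hpt : ∀ m, Complex.exp (-Complex.I * ((⟪k, y + L m⟫ : ℝ) : ℂ)) * Φ (y + L m)
      = -Complex.I * (f' m y (EuclideanSpace.single j 1)) + ((k j : ℝ) : ℂ) * g m y := by
    intro m
    have hfa : f' m y (EuclideanSpace.single j 1)
        = Complex.exp (-Complex.I * ((⟪k, y + L m⟫ : ℝ) : ℂ)) *
            (fderiv ℝ (⇑Ψ) (y + L m) (EuclideanSpace.single j 1))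
          + Ψ (y + L m) * (Complex.exp (-Complex.I * ((⟪k, y + L m⟫ : ℝ) : ℂ)) *
              (-Complex.I * ((k j : ℝ) : ℂ))) := by
      simp only [hf'def, hAdef, ContinuousLinearMap.add_apply, ContinuousLinearMap.coe_smul',
        Pi.smul_apply, smul_eq_mul, ContinuousLinearMap.coe_comp', Function.comp_apply,
        coe_innerSL_apply, Complex.ofRealCLM_apply, ContinuousLinearMap.neg_apply,
        innerSL_apply_apply, hinnerj, neg_mul, mul_neg]
    rw [hfa, hΦ, hgdef]
    simp only []
    linear_combination (-(((k j : ℝ) : ℂ) * Ψ (y + L m) *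
      Complex.exp (-Complex.I * ((⟪k, y + L m⟫ : ℝ) : ℂ)))) * Complex.I_sq
  have key : zak (⇑b) Φ k y
      = -Complex.I * (∑' m, f' m y (EuclideanSpace.single j 1))
        + ((k j : ℝ) : ℂ) * ∑' m, g m y := by
    rw [hzakPhi]
    calc (∑' m, Complex.exp (-Complex.I * ((⟪k, y + L m⟫ : ℝ) : ℂ)) * Φ (y + L m))
        = ∑' m, (-Complex.I * (f' m y (EuclideanSpace.single j 1)) + ((k j : ℝ) : ℂ) * g m y) :=
          tsum_congr fun m => hpt m
      _ = (∑' m, -Complex.I * (f' m y (EuclideanSpace.single j 1)))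
            + ∑' m, ((k j : ℝ) : ℂ) * g m y :=
          Summable.tsum_add (Sf'a.mul_left _) (hg0.mul_left _)
      _ = _ := by rw [tsum_mul_left, tsum_mul_left]
  rw [key, hfd, happly, hzakPsiy]
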